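/- In a graph where every vertex has degree at most 3, two vertices are 2-edge-connected if and only if they are biconnected; moreover every cutvertex of such a graph is incident to a bridge. -/

import Mathlib

open SimpleGraph

/-- `u` and `v` are 2-edge-connected: connected, and no single edge removal
disconnects them. -/
def TwoEdgeConnected {V : Type*} (G : SimpleGraph V) (u v : V) : Prop :=
  G.Reachable u v ∧ ∀ e ∈ G.edgeSet, (G.deleteEdges {e}).Reachable u v

/-- `u` and `v` are biconnected: 2-edge-connected, and no removal of a single vertex
other than `u`, `v` disconnects them. -/
def Biconnected13 {V : Type*} (G : SimpleGraph V) (u v : V) : Prop :=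
  TwoEdgeConnected G u v ∧
    ∀ w, ∀ (hu : u ≠ w) (hv : v ≠ w),
      (G.induce {x | x ≠ w}).Reachable ⟨u, hu⟩ ⟨v, hv⟩

/-- `w` is a cutvertex of `G`: its removal disconnects some pair of other vertices. -/
def IsCutvertex {V : Type*} (G : SimpleGraph V) (w : V) : Prop :=
  ∃ u v : V, u ≠ w ∧ v ≠ w ∧ G.Reachable u v ∧
    ∀ (hu : u ≠ w) (hv : v ≠ w), ¬ (G.induce {x | x ≠ w}).Reachable ⟨u, hu⟩ ⟨v, hv⟩


open SimpleGraph

/-- `x` is on the `u`-side: reachable from `u` avoiding `w`. -/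
def Side13 {V : Type*} (G : SimpleGraph V) (w u x : V) : Prop :=
  ∃ (h1 : u ≠ w) (h2 : x ≠ w), (G.induce {z | z ≠ w}).Reachable ⟨u, h1⟩ ⟨x, h2⟩

lemma side13_refl {V : Type*} (G : SimpleGraph V) {w u : V} (h : u ≠ w) :
    Side13 G w u u := ⟨h, h, Reachable.refl _⟩

lemma side13_step {V : Type*} (G : SimpleGraph V) {w u x y : V}
    (hx : Side13 G w u x) (hxy : G.Adj x y) (hy : y ≠ w) : Side13 G w u y := by
  obtain ⟨h1, h2, hr⟩ := hx
  exact ⟨h1, hy, hr.trans (Adj.reachable (by simpa using hxy :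
    (G.induce {z | z ≠ w}).Adj ⟨x, h2⟩ ⟨y, hy⟩))⟩

lemma side13_trans {V : Type*} (G : SimpleGraph V) {w u v y : V}
    (hy : Side13 G w u y) (hy' : Side13 G w v y) (h1 : u ≠ w) (h2 : v ≠ w) :
    (G.induce {z | z ≠ w}).Reachable ⟨u, h1⟩ ⟨v, h2⟩ := by
  obtain ⟨_, hyw, hr⟩ := hy
  obtain ⟨_, _, hr'⟩ := hy'
  exact hr.trans hr'.symm

/-- Key walk lemma: any walk from a `u`-side vertex through `w` uses an edge from a
`u`-side neighbor of `w` to `w`. -/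
lemma walkSide13 {V : Type*} (G : SimpleGraph V) {w u : V} :
    ∀ {a b : V} (q : G.Walk a b), Side13 G w u a → a ≠ w → w ∈ q.support →
      ∃ y, Side13 G w u y ∧ G.Adj y w ∧ s(y, w) ∈ q.edges := by
  intro a b q
  induction q with
  | nil =>
    intro _ ha hw
    simp only [Walk.support_nil, List.mem_singleton] at hw
    exact absurd hw.symm ha
  | @cons a c b h p ih =>
    intro hside ha hw
    by_cases hc : c = w
    · subst hc
      exact ⟨a, hside, h, by simp⟩
    · have hw' : w ∈ p.support := by
        simp only [Walk.support_cons, List.mem_cons] at hw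
        exact hw.resolve_left (fun h' => ha h'.symm)
      obtain ⟨y, hy, hyw, hye⟩ := ih (side13_step G hside h hc) hc hw'
      exact ⟨y, hy, hyw, by simp [hye]⟩

/-- A walk avoiding `w` lifts to the induced subgraph. -/
lemma liftWalk13 {V : Type*} (G : SimpleGraph V) {w : V} :
    ∀ {a b : V} (q : G.Walk a b) (_ : w ∉ q.support) (ha : a ≠ w) (hb : b ≠ w),
      (G.induce {z | z ≠ w}).Reachable ⟨a, ha⟩ ⟨b, hb⟩ := by
  intro a b q
  induction q with
  | nil => intro _ ha hb; rfl
  | @cons a c b h p ih =>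
    intro hw ha hb
    have hc : c ≠ w := by
      intro h'; subst h'
      exact hw (by simp)
    have hw' : w ∉ p.support := fun h' => hw (by simp [h'])
    exact (Adj.reachable (by simpa using h :
      (G.induce {z | z ≠ w}).Adj ⟨a, ha⟩ ⟨c, hc⟩)).trans (ih hw' hc hb)

/-- Core lemma: if the unique `u`-side neighbor of `w` is `x`, then `s(x,w)` is a
bridge and its deletion disconnects `u` from `v`. -/
lemma core13 {V : Type*} (G : SimpleGraph V) {u v w : V} (hu : u ≠ w) (hv : v ≠ w)
    (hsep : ¬ (G.induce {z | z ≠ w}).Reachable ⟨u, hu⟩ ⟨v, hv⟩)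
    (x : V) (hadj : G.Adj x w) (hxS : Side13 G w u x)
    (huniq : ∀ y, G.Adj y w → Side13 G w u y → y = x) :
    G.IsBridge s(x, w) ∧ ¬ (G.deleteEdges {s(x, w)}).Reachable u v := by
  -- every u-v walk uses the edge s(x,w)
  have claimA : ∀ p : G.Walk u v, s(x, w) ∈ p.edges := by
    intro p
    by_cases hwp : w ∈ p.support
    · obtain ⟨y, hy, hyw, hye⟩ := walkSide13 G p (side13_refl G hu) hu hwp
      rwa [huniq y hyw hy] at hye
    · exact absurd (liftWalk13 G p hwp hu hv) hsep
  constructor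
  · rw [isBridge_iff]
    rw [reachable_deleteEdges_iff_exists_walk]
    rintro ⟨p, hp⟩
    obtain ⟨y, hy, hyw, hye⟩ := walkSide13 G p hxS hadj.ne p.end_mem_support
    rw [huniq y hyw hy] at hye
    exact hp hye
  · rintro ⟨p⟩
    have hsub : ∀ e ∈ p.edges, e ∈ G.edgeSet := fun e he =>
      ((edgeSet_deleteEdges _ ▸ p.edges_subset_edgeSet he : e ∈ G.edgeSet \ _)).1
    have := claimA (p.transfer G hsub)
    rw [Walk.edges_transfer] at this
    have : s(x, w) ∈ (G.deleteEdges {s(x, w)}).edgeSet := p.edges_subset_edgeSet this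
    rw [edgeSet_deleteEdges] at this
    exact this.2 rfl

/-- Main key lemma. -/
lemma key13 {V : Type*} [Fintype V] (G : SimpleGraph V) [DecidableRel G.Adj]
    {u v w : V} (hu : u ≠ w) (hv : v ≠ w) (hreach : G.Reachable u v)
    (hsep : ¬ (G.induce {z | z ≠ w}).Reachable ⟨u, hu⟩ ⟨v, hv⟩)
    (hdeg : G.degree w ≤ 3) :
    ∃ e ∈ G.edgeSet, w ∈ e ∧ G.IsBridge e ∧ ¬ (G.deleteEdges {e}).Reachable u v := by
  classical
  obtain ⟨p⟩ := hreach
  have hwp : w ∈ p.support := by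
    by_contra h
    exact hsep (liftWalk13 G p h hu hv)
  set NU := (G.neighborFinset w).filter (fun y => Side13 G w u y) with hNU
  set NV := (G.neighborFinset w).filter (fun y => Side13 G w v y) with hNV
  have hmemU : ∀ y, y ∈ NU ↔ G.Adj y w ∧ Side13 G w u y := by
    intro y; simp [hNU, mem_neighborFinset, adj_comm]
  have hmemV : ∀ y, y ∈ NV ↔ G.Adj y w ∧ Side13 G w v y := by
    intro y; simp [hNV, mem_neighborFinset, adj_comm]
  have hUne : NU.Nonempty := by
    obtain ⟨y, hy, hyw, _⟩ := walkSide13 G p (side13_refl G hu) hu hwp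
    exact ⟨y, (hmemU y).2 ⟨hyw, hy⟩⟩
  have hVne : NV.Nonempty := by
    obtain ⟨y, hy, hyw, _⟩ := walkSide13 G p.reverse (side13_refl G hv) hv
      (by rwa [Walk.support_reverse, List.mem_reverse])
    exact ⟨y, (hmemV y).2 ⟨hyw, hy⟩⟩
  have hdisj : Disjoint NU NV := by
    rw [Finset.disjoint_left]
    intro y hyU hyV
    exact hsep (side13_trans G ((hmemU y).1 hyU).2 ((hmemV y).1 hyV).2 hu hv)
  have hcard : NU.card + NV.card ≤ 3 := by
    rw [← Finset.card_union_of_disjoint hdisj]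
    calc (NU ∪ NV).card ≤ (G.neighborFinset w).card := by
          apply Finset.card_le_card
          rw [Finset.union_subset_iff]
          exact ⟨Finset.filter_subset _ _, Finset.filter_subset _ _⟩
      _ ≤ 3 := hdeg
  have h1 : 1 ≤ NU.card := Finset.card_pos.2 hUne
  have h2 : 1 ≤ NV.card := Finset.card_pos.2 hVne
  have : NU.card = 1 ∨ NV.card = 1 := by omega
  rcases this with h | h
  · obtain ⟨x, hx⟩ := Finset.card_eq_one.1 h
    have hxm := (hmemU x).1 (hx ▸ Finset.mem_singleton_self x)
    have huniq : ∀ y, G.Adj y w → Side13 G w u y → y = x := by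
      intro y hyw hy
      have : y ∈ NU := (hmemU y).2 ⟨hyw, hy⟩
      rwa [hx, Finset.mem_singleton] at this
    obtain ⟨hb, hnr⟩ := core13 G hu hv hsep x hxm.1 hxm.2 huniq
    exact ⟨s(x, w), hxm.1, by simp, hb, hnr⟩
  · obtain ⟨x, hx⟩ := Finset.card_eq_one.1 h
    have hxm := (hmemV x).1 (hx ▸ Finset.mem_singleton_self x)
    have huniq : ∀ y, G.Adj y w → Side13 G w v y → y = x := by
      intro y hyw hy
      have : y ∈ NV := (hmemV y).2 ⟨hyw, hy⟩
      rwa [hx, Finset.mem_singleton] at this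
    obtain ⟨hb, hnr⟩ := core13 G hv hu (fun h' => hsep h'.symm) x hxm.1 hxm.2 huniq
    exact ⟨s(x, w), hxm.1, by simp, hb, fun h' => hnr h'.symm⟩

/-- In a graph with maximum degree 3, two vertices are 2-edge-connected iff they are
biconnected; moreover every cutvertex is incident to a bridge. -/
theorem stmt13 {V : Type*} [Fintype V] (G : SimpleGraph V) [DecidableRel G.Adj]
    (hdeg : ∀ v, G.degree v ≤ 3) :
    (∀ u v : V, TwoEdgeConnected G u v ↔ Biconnected13 G u v) ∧
      (∀ w : V, IsCutvertex G w → ∃ e ∈ G.edgeSet, w ∈ e ∧ G.IsBridge e) := by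
  constructor
  · intro u v
    constructor
    · intro h2
      refine ⟨h2, ?_⟩
      intro w hu hv
      by_contra hsep
      obtain ⟨e, he, _, _, hnr⟩ := key13 G hu hv h2.1 hsep (hdeg w)
      exact hnr (h2.2 e he)
    · exact fun h => h.1
  · rintro w ⟨u, v, hu, hv, hreach, hsep⟩
    obtain ⟨e, he, hwe, hb, _⟩ := key13 G hu hv hreach (hsep hu hv) (hdeg w)
    exact ⟨e, he, hwe, hb⟩
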